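/- For every prime p, every point ξ ∈ ℙ¹(ℚ_p), and every integer v ≥ 1, the closed ball B_v(ξ) := {η ∈ ℙ¹(ℚ_p) : δ(ξ,η) ≤ p^{−v}} satisfies ν(B_v(ξ)) = p^{−v} · p/(p+1). In particular, ν({[x:1] : x ∈ ℤ_p}) = p/(p+1). -/

import Mathlib

open MeasureTheory
open scoped LinearAlgebra.Projectivization

namespace LogCoulomb

noncomputable section

/-! ### The projective line over `ℚ_p`, its spherical metric and `PGL₂`-invariant measure -/

variable (p : ℕ) [Fact p.Prime]

instance : MeasurableSpace ℚ_[p] := borel _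
instance : BorelSpace ℚ_[p] := ⟨rfl⟩

/-- The projective line over `ℚ_p`. -/
abbrev P1 := ℙ ℚ_[p] (Fin 2 → ℚ_[p])

instance : TopologicalSpace (P1 p) :=
  inferInstanceAs (TopologicalSpace (Quotient _))

instance : MeasurableSpace (P1 p) := borel _
instance : BorelSpace (P1 p) := ⟨rfl⟩

/-- Spherical distance on homogeneous coordinates:
`δ((x₀,x₁),(y₀,y₁)) = |x₀y₁ - x₁y₀| / (max(|x₀|,|x₁|) ⬝ max(|y₀|,|y₁|))`. -/
def sdelta (x y : Fin 2 → ℚ_[p]) : ℝ :=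
  ‖x 0 * y 1 - x 1 * y 0‖ / (max ‖x 0‖ ‖x 1‖ * max ‖y 0‖ ‖y 1‖)

/-- The spherical metric on `ℙ¹(ℚ_p)`, defined via the canonical representatives. -/
def pdelta (ξ η : P1 p) : ℝ := sdelta p ξ.rep η.rep

open Classical in
/-- The action of a matrix on `ℙ¹(ℚ_p)`: `[x₀:x₁] ↦ [a x₀ + b x₁ : c x₀ + d x₁]`
(well-defined, and given by the first branch of the `if`, whenever `A` is invertible). -/
def mobius (A : Matrix (Fin 2) (Fin 2) ℚ_[p]) (ξ : P1 p) : P1 p :=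
  if h : A.mulVec ξ.rep ≠ 0 then Projectivization.mk ℚ_[p] (A.mulVec ξ.rep) h else ξ

/-- `ν` is invariant under the action of `GL₂(ℤ_p)` on `ℙ¹(ℚ_p)`; membership of the matrix
entries in `ℤ_p`, and invertibility of the matrix over `ℤ_p`, are phrased via the `p`-adic
norm on `ℚ_p`. -/
def IsGLInvariant (ν : Measure (P1 p)) : Prop :=
  ∀ A : Matrix (Fin 2) (Fin 2) ℚ_[p],
    (∀ i j, ‖A i j‖ ≤ 1) → ‖A.det‖ = 1 →
      ∀ M : Set (P1 p), MeasurableSet M → ν (mobius p A '' M) = ν M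

/-- The embedding `ι : ℚ_p → ℙ¹(ℚ_p)`, `x ↦ [x : 1]`. -/
def iota (x : ℚ_[p]) : P1 p :=
  Projectivization.mk ℚ_[p] ![x, 1] (by
    intro h
    have h1 := congrFun h 1
    simp at h1)

/-! ### Canonical partition functions -/

/-- The pairs `(i,j)` with `i < j`. -/
def pairs (N : ℕ) : Finset (Fin N × Fin N) := Finset.univ.filter fun q => q.1 < q.2

/-- The closed unit ball `ℤ_p = R` inside `ℚ_p`. -/
def Zball : Set ℚ_[p] := {x | ‖x‖ ≤ 1}

/-- The open unit ball `pℤ_p = P` inside `ℚ_p`. -/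
def Pball : Set ℚ_[p] := {x | ‖x‖ < 1}

/-- The one-component canonical partition function
`Z_N(X, β) = ∫_{X^N} ∏_{i<j} |x_i - x_j|^β dμ^N` (as a Bochner integral, whether or not it
converges absolutely). -/
def ZN (μ : Measure ℚ_[p]) [SigmaFinite μ] (X : Set ℚ_[p]) (N : ℕ) (β : ℂ) : ℂ :=
  ∫ x : Fin N → ℚ_[p], ∏ q ∈ pairs N, (‖x q.1 - x q.2‖ : ℂ) ^ β
    ∂(Measure.pi fun _ => μ.restrict X)

/-- The multivariate canonical partition function
`𝒵_I(X, s) = ∫_{X^I} ∏_{i<j, i,j ∈ I} |x_i - x_j|^{s_{ij}} dμ^I` for a subset `I ⊆ [N]`. -/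
def ZI (μ : Measure ℚ_[p]) [SigmaFinite μ] (X : Set ℚ_[p]) {N : ℕ} (I : Finset (Fin N))
    (s : Fin N → Fin N → ℂ) : ℂ :=
  ∫ x : I → ℚ_[p],
    ∏ q ∈ Finset.univ.filter (fun q : (↥I) × (↥I) => (q.1 : Fin N) < (q.2 : Fin N)),
      (‖x q.1 - x q.2‖ : ℂ) ^ s q.1.1 q.2.1
    ∂(Measure.pi fun _ => μ.restrict X)

/-- The multivariate canonical partition function
`𝒵_N(ℙ¹(ℚ_p), s) = ∫_{(ℙ¹(ℚ_p))^N} ∏_{i<j} δ(ξ_i,ξ_j)^{s_{ij}} dν^N`. -/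
def ZP1s (ν : Measure (P1 p)) [SigmaFinite ν] (N : ℕ) (s : Fin N → Fin N → ℂ) : ℂ :=
  ∫ x : Fin N → P1 p, ∏ q ∈ pairs N, ((pdelta p (x q.1) (x q.2) : ℝ) : ℂ) ^ s q.1 q.2
    ∂(Measure.pi fun _ => ν)

/-- The one-component canonical partition function `Z_N(ℙ¹(ℚ_p), β)`. -/
def ZP1 (ν : Measure (P1 p)) [SigmaFinite ν] (N : ℕ) (β : ℂ) : ℂ :=
  ∫ x : Fin N → P1 p, ∏ q ∈ pairs N, ((pdelta p (x q.1) (x q.2) : ℝ) : ℂ) ^ β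
    ∂(Measure.pi fun _ => ν)

/-! ### The quadratic recurrence -/

/-- The factor `ρ_{N,k}(t,β)` appearing in the quadratic recurrence; here
`N.choose 2 = N(N-1)/2`. -/
def rho (N k : ℕ) (t : ℝ) (β : ℂ) : ℂ :=
  if t = 0 then
    (((N : ℂ) + (N.choose 2 : ℂ) * β) * (1 - 2 * (k : ℂ) / (N : ℂ)) + 1) /
      (((N : ℂ) + (N.choose 2 : ℂ) * β) - 1)
  else
    Complex.sinh (((t : ℂ) / 2) * (((N : ℂ) + (N.choose 2 : ℂ) * β) * (1 - 2 * (k : ℂ) / (N : ℂ)) + 1)) /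
      Complex.sinh (((t : ℂ) / 2) * (((N : ℂ) + (N.choose 2 : ℂ) * β) - 1))

/-- The quadratic recurrence: `F 0 = F 1 = 1` and
`F N t β = ∑_{k=1}^{N-1} (k/N) ρ_{N,k}(t,β) F_{N-k}(t,β) F_k(t,β)` for `N ≥ 2`. -/
def F : ℕ → ℝ → ℂ → ℂ
  | 0, _, _ => 1
  | 1, _, _ => 1
  | N + 2, t, β =>
    ∑ k ∈ (Finset.Icc 1 (N + 1)).attach,
      (((k : ℕ) : ℂ) / ((N : ℂ) + 2)) * rho (N + 2) k t β *
        F (N + 2 - (k : ℕ)) t β * F (k : ℕ) t β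
  decreasing_by
  all_goals
    have hk := Finset.mem_Icc.mp k.2
    omega

/-! ### Splitting chains -/

/-- A splitting chain `Λ_0 > Λ_1 > ⋯ > Λ_L` of set partitions of the subset `I ⊆ [N]`,
beginning with the trivial partition `{I}` and ending with the partition of `I` into
singletons.  (The values `Λ ℓ` for `ℓ > L` are required to be `∅`, so that a chain is
determined by the genuine data `Λ_0, …, Λ_L`.) -/
structure SplChain (N : ℕ) (I : Finset (Fin N)) where
  L : ℕ
  Λ : ℕ → Finset (Finset (Fin N))
  nonempty_mem : ∀ ℓ ≤ L, ∀ B ∈ Λ ℓ, B.Nonempty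
  subset_mem : ∀ ℓ ≤ L, ∀ B ∈ Λ ℓ, B ⊆ I
  cover : ∀ ℓ ≤ L, ∀ i ∈ I, ∃! B, B ∈ Λ ℓ ∧ i ∈ B
  first : Λ 0 = {I}
  last : Λ L = I.image fun i => {i}
  refines : ∀ ℓ < L, ∀ B ∈ Λ (ℓ + 1), ∃ C ∈ Λ ℓ, B ⊆ C
  strict : ∀ ℓ < L, Λ (ℓ + 1) ≠ Λ ℓ
  trailing : ∀ ℓ, L < ℓ → Λ ℓ = ∅

variable {N : ℕ} {I : Finset (Fin N)}

/-- The branches of a splitting chain: the non-singleton parts,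
`ℬ(𝔖) = (Λ_0 ∪ ⋯ ∪ Λ_{L-1}) \ Λ_L`. -/
def SplChain.branches (S : SplChain N I) : Finset (Finset (Fin N)) :=
  ((Finset.range S.L).biUnion S.Λ) \ S.Λ S.L

/-- The depth `ℓ_𝔖(λ) = max {ℓ : λ ∈ Λ_ℓ}` of a branch. -/
def SplChain.depth (S : SplChain N I) (lam : Finset (Fin N)) : ℕ :=
  ((Finset.range (S.L + 1)).filter fun ℓ => lam ∈ S.Λ ℓ).sup id

/-- The degree `deg_𝔖(λ) = #{λ' ∈ Λ_{ℓ_𝔖(λ)+1} : λ' ⊆ λ}` of a branch. -/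
def SplChain.degree (S : SplChain N I) (lam : Finset (Fin N)) : ℕ :=
  ((S.Λ (S.depth lam + 1)).filter fun lam' => lam' ⊆ lam).card

/-- A splitting chain is reduced if every branch appears in exactly one partition of the
chain (namely the one at its depth). -/
def SplChain.Reduced (S : SplChain N I) : Prop :=
  ∀ lam ∈ S.branches, ∀ ℓ ≤ S.L, (lam ∈ S.Λ ℓ ↔ ℓ = S.depth lam)

/-- `e_λ(s) = #λ - 1 + ∑_{i<j, i,j ∈ λ} s_{ij}`. -/
def eexp (lam : Finset (Fin N)) (s : Fin N → Fin N → ℂ) : ℂ :=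
  (lam.card : ℂ) - 1 + ∑ q ∈ (pairs N).filter fun q => q.1 ∈ lam ∧ q.2 ∈ lam, s q.1 q.2

/-- Membership in `Ω_I`: `Re e_λ(s) > 0` for every `λ ⊆ I` with `#λ > 1`. -/
def InOmega (I : Finset (Fin N)) (s : Fin N → Fin N → ℂ) : Prop :=
  ∀ lam ⊆ I, 1 < lam.card → 0 < (eexp lam s).re


/-- The multivariate canonical partition function `𝒵_N(ℤ_p, s)` over `Fin N`-indexed tuples. -/
def ZNs (μ : Measure ℚ_[p]) [SigmaFinite μ] (X : Set ℚ_[p]) (N : ℕ)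
    (s : Fin N → Fin N → ℂ) : ℂ :=
  ∫ x : Fin N → ℚ_[p], ∏ q ∈ pairs N, (‖x q.1 - x q.2‖ : ℂ) ^ s q.1 q.2
    ∂(Measure.pi fun _ => μ.restrict X)

/-- The ball `p^v ℤ_p = {x : |x| ≤ p^{-v}}` in `ℚ_p`. -/
def pvball (v : ℤ) : Set ℚ_[p] := {x | ‖x‖ ≤ (p : ℝ) ^ (-v)}

/-- `G_N(q,β) = N! q^{(1/2)(N choose 2)β} F_N(log q, β)`. -/
def GN (N : ℕ) (β : ℂ) (q : ℝ) : ℂ :=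
  (N.factorial : ℂ) * (q : ℂ) ^ ((N.choose 2 : ℂ) * β / 2) * F N (Real.log q) β

/-- `H_N(q,β)`, the efficient formula for `Z_N(ℙ¹(K),β)` as a function of `q`. -/
def HN (N : ℕ) (β : ℂ) (q : ℝ) : ℂ :=
  (N.factorial : ℂ) * ∑ k ∈ Finset.range (N + 1),
    Complex.cosh (((Real.log q : ℂ) / 2) * ((N : ℂ) + (N.choose 2 : ℂ) * β) *
          (1 - 2 * (k : ℂ) / (N : ℂ))) /
        (2 * Complex.cosh ((Real.log q : ℂ) / 2)) ^ N *
      F (N - k) (Real.log q) β * F k (Real.log q) β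

end

section Aux

variable {p : ℕ} [Fact p.Prime]

/-- The second chart embedding `y ↦ [1 : y]`. -/
noncomputable def iotaP (y : ℚ_[p]) : P1 p :=
  Projectivization.mk ℚ_[p] ![1, y] (by
    intro h
    have h0 := congrFun h 0
    simp at h0)

lemma nmax_pos {x : Fin 2 → ℚ_[p]} (hx : x ≠ 0) : 0 < max ‖x 0‖ ‖x 1‖ := by
  rcases eq_or_ne (x 0) 0 with h0 | h0
  · have h1 : x 1 ≠ 0 := by
      intro h1
      apply hx
      funext i
      fin_cases i <;> simpa
    exact lt_max_of_lt_right (norm_pos_iff.mpr h1)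
  · exact lt_max_of_lt_left (norm_pos_iff.mpr h0)

lemma sdelta_smul_smul (a b : ℚ_[p]) (ha : a ≠ 0) (hb : b ≠ 0) (x y : Fin 2 → ℚ_[p]) :
    sdelta p (a • x) (b • y) = sdelta p x y := by
  unfold sdelta
  simp only [Pi.smul_apply, smul_eq_mul]
  have h1 : a * x 0 * (b * y 1) - a * x 1 * (b * y 0) = a * b * (x 0 * y 1 - x 1 * y 0) := by
    ring
  rw [h1]
  simp only [norm_mul]
  rw [← mul_max_of_nonneg _ _ (norm_nonneg a), ← mul_max_of_nonneg _ _ (norm_nonneg b)]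
  have ha' : ‖a‖ ≠ 0 := norm_ne_zero_iff.mpr ha
  have hb' : ‖b‖ ≠ 0 := norm_ne_zero_iff.mpr hb
  rcases eq_or_ne (max ‖x 0‖ ‖x 1‖) 0 with hx | hx
  · simp [hx]
  rcases eq_or_ne (max ‖y 0‖ ‖y 1‖) 0 with hy | hy
  · simp [hy]
  field_simp

lemma pdelta_mk {x y : Fin 2 → ℚ_[p]} (hx : x ≠ 0) (hy : y ≠ 0) :
    pdelta p (Projectivization.mk ℚ_[p] x hx) (Projectivization.mk ℚ_[p] y hy) =
      sdelta p x y := by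
  obtain ⟨a, ha⟩ := Projectivization.exists_smul_eq_mk_rep ℚ_[p] x hx
  obtain ⟨b, hb⟩ := Projectivization.exists_smul_eq_mk_rep ℚ_[p] y hy
  unfold pdelta
  rw [← ha, ← hb, Units.smul_def, Units.smul_def]
  exact sdelta_smul_smul _ _ a.ne_zero b.ne_zero x y

lemma pdelta_self (ξ : P1 p) : pdelta p ξ ξ = 0 := by
  unfold pdelta sdelta
  rw [mul_comm (ξ.rep 0)]
  simp

/-- pdelta between two points in the first chart. -/
lemma pdelta_iota_iota {x y : ℚ_[p]} (hx : ‖x‖ ≤ 1) (hy : ‖y‖ ≤ 1) :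
    pdelta p (iota p x) (iota p y) = ‖x - y‖ := by
  unfold iota
  rw [pdelta_mk]
  unfold sdelta
  simp only [Matrix.cons_val_zero, Matrix.cons_val_one, Matrix.head_cons, norm_one]
  rw [max_eq_right hx, max_eq_right hy, show x * 1 - 1 * y = x - y by ring, one_mul, div_one]

/-- pdelta between two points in the second chart. -/
lemma pdelta_iotaP_iotaP {x y : ℚ_[p]} (hx : ‖x‖ ≤ 1) (hy : ‖y‖ ≤ 1) :
    pdelta p (iotaP x) (iotaP y) = ‖x - y‖ := by
  unfold iotaP
  rw [pdelta_mk]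
  unfold sdelta
  simp only [Matrix.cons_val_zero, Matrix.cons_val_one, Matrix.head_cons, norm_one]
  rw [max_eq_left hx, max_eq_left hy, show (1 : ℚ_[p]) * y - x * 1 = y - x by ring,
    one_mul, div_one, norm_sub_rev]

/-- pdelta between points in different charts is 1. -/
lemma norm_sub_one_eq_one {a : ℚ_[p]} (h : ‖a‖ < 1) : ‖a - 1‖ = 1 := by
  rw [sub_eq_add_neg, Padic.add_eq_max_of_ne, norm_neg, norm_one, max_eq_right h.le]
  rw [norm_neg, norm_one]
  exact ne_of_lt h

lemma norm_one_sub_eq_one {a : ℚ_[p]} (h : ‖a‖ < 1) : ‖1 - a‖ = 1 := by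
  rw [norm_sub_rev]
  exact norm_sub_one_eq_one h

lemma pdelta_iota_iotaP {x y : ℚ_[p]} (hx : ‖x‖ ≤ 1) (hy : ‖y‖ < 1) :
    pdelta p (iota p x) (iotaP y) = 1 := by
  unfold iota iotaP
  rw [pdelta_mk]
  unfold sdelta
  simp only [Matrix.cons_val_zero, Matrix.cons_val_one, Matrix.head_cons, norm_one]
  rw [max_eq_right hx, max_eq_left hy.le]
  norm_num
  refine norm_sub_one_eq_one ?_
  rw [norm_mul]
  nlinarith [norm_nonneg x, norm_nonneg y]

lemma pdelta_iotaP_iota {x y : ℚ_[p]} (hx : ‖x‖ < 1) (hy : ‖y‖ ≤ 1) :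
    pdelta p (iotaP x) (iota p y) = 1 := by
  unfold iota iotaP
  rw [pdelta_mk]
  unfold sdelta
  simp only [Matrix.cons_val_zero, Matrix.cons_val_one, Matrix.head_cons, norm_one]
  rw [max_eq_right hy, max_eq_left hx.le]
  norm_num
  refine norm_one_sub_eq_one ?_
  rw [norm_mul]
  nlinarith [norm_nonneg x, norm_nonneg y]

lemma iota_injective {x y : ℚ_[p]} (h : iota p x = iota p y) : x = y := by
  rw [iota, iota, Projectivization.mk_eq_mk_iff] at h
  obtain ⟨a, ha⟩ := h
  have h1 := congrFun ha 1
  have h0 := congrFun ha 0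
  simp only [Units.smul_def, Pi.smul_apply, Matrix.cons_val_one, Matrix.head_cons,
    smul_eq_mul, mul_one, Matrix.cons_val_zero] at h1 h0
  rw [h1] at h0
  simpa using h0.symm

lemma iotaP_injective {x y : ℚ_[p]} (h : (iotaP x : P1 p) = iotaP y) : x = y := by
  rw [iotaP, iotaP, Projectivization.mk_eq_mk_iff] at h
  obtain ⟨a, ha⟩ := h
  have h1 := congrFun ha 1
  have h0 := congrFun ha 0
  simp only [Units.smul_def, Pi.smul_apply, Matrix.cons_val_one, Matrix.head_cons,
    smul_eq_mul, mul_one, Matrix.cons_val_zero] at h1 h0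
  rw [h0, one_mul] at h1
  exact h1.symm

lemma iota_ne_iotaP {x y : ℚ_[p]} (hx : ‖x‖ ≤ 1) (hy : ‖y‖ < 1) :
    iota p x ≠ iotaP y := by
  intro h
  have h1 : pdelta p (iota p x) (iotaP y) = 1 := pdelta_iota_iotaP hx hy
  rw [h, pdelta_self] at h1
  norm_num at h1

/-- Every point of `ℙ¹(ℚ_p)` lies in one of the two charts. -/
lemma chart_cases (ξ : P1 p) :
    (∃ x : ℚ_[p], ‖x‖ ≤ 1 ∧ ξ = iota p x) ∨ (∃ y : ℚ_[p], ‖y‖ < 1 ∧ ξ = iotaP y) := by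
  induction ξ using Projectivization.ind with
  | h v hv =>
  rcases le_or_gt ‖v 0‖ ‖v 1‖ with h01 | h01
  · left
    have hv1 : v 1 ≠ 0 := by
      intro h1
      apply hv
      funext i
      fin_cases i
      · simpa using norm_le_zero_iff.mp (by simpa [h1] using h01)
      · simpa
    refine ⟨v 0 / v 1, ?_, ?_⟩
    · rw [norm_div, div_le_one (norm_pos_iff.mpr hv1)]
      exact h01
    · rw [iota]
      rw [Projectivization.mk_eq_mk_iff]
      refine ⟨Units.mk0 (v 1) hv1, ?_⟩
      funext i
      fin_cases i <;> simp [Units.smul_def] <;> field_simp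
  · right
    have hv0 : v 0 ≠ 0 := by
      intro h0
      rw [h0, norm_zero] at h01
      exact absurd h01 (not_lt.mpr (norm_nonneg _))
    refine ⟨v 1 / v 0, ?_, ?_⟩
    · rw [norm_div, div_lt_one (norm_pos_iff.mpr hv0)]
      exact h01
    · rw [iotaP]
      rw [Projectivization.mk_eq_mk_iff]
      refine ⟨Units.mk0 (v 0) hv0, ?_⟩
      funext i
      fin_cases i <;> simp [Units.smul_def] <;> field_simp

end Aux


section Aux2

variable {p : ℕ} [Fact p.Prime]

/-- The (rotated) adjugate matrix. -/
noncomputable def amat (A : Matrix (Fin 2) (Fin 2) ℚ_[p]) : Matrix (Fin 2) (Fin 2) ℚ_[p] :=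
  Matrix.of ![![A 1 1, -(A 0 1)], ![-(A 1 0), A 0 0]]

lemma amat_entries {A : Matrix (Fin 2) (Fin 2) ℚ_[p]} (hA : ∀ i j, ‖A i j‖ ≤ 1) :
    ∀ i j, ‖amat A i j‖ ≤ 1 := by
  intro i j
  fin_cases i <;> fin_cases j <;> simp [amat] <;> exact hA _ _

lemma amat_det (A : Matrix (Fin 2) (Fin 2) ℚ_[p]) : (amat A).det = A.det := by
  simp [amat, Matrix.det_fin_two]
  ring

lemma amat_mulVec (A : Matrix (Fin 2) (Fin 2) ℚ_[p]) (x : Fin 2 → ℚ_[p]) :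
    (amat A).mulVec (A.mulVec x) = A.det • x := by
  funext i
  fin_cases i <;>
    simp [amat, Matrix.mulVec, dotProduct, Fin.sum_univ_two, Matrix.det_fin_two,
      Pi.smul_apply, smul_eq_mul] <;>
    ring

lemma mulVec_amat (A : Matrix (Fin 2) (Fin 2) ℚ_[p]) (x : Fin 2 → ℚ_[p]) :
    A.mulVec ((amat A).mulVec x) = A.det • x := by
  funext i
  fin_cases i <;>
    simp [amat, Matrix.mulVec, dotProduct, Fin.sum_univ_two, Matrix.det_fin_two,
      Pi.smul_apply, smul_eq_mul] <;>
    ring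

lemma nmax_mulVec_le (A : Matrix (Fin 2) (Fin 2) ℚ_[p]) (hA : ∀ i j, ‖A i j‖ ≤ 1)
    (x : Fin 2 → ℚ_[p]) :
    max ‖A.mulVec x 0‖ ‖A.mulVec x 1‖ ≤ max ‖x 0‖ ‖x 1‖ := by
  have key : ∀ i, ‖A.mulVec x i‖ ≤ max ‖x 0‖ ‖x 1‖ := by
    intro i
    have hi : A.mulVec x i = A i 0 * x 0 + A i 1 * x 1 := by
      simp [Matrix.mulVec, dotProduct, Fin.sum_univ_two]
    rw [hi]
    refine le_trans (Padic.nonarchimedean _ _) (max_le ?_ ?_)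
    · rw [norm_mul]
      exact le_trans (mul_le_of_le_one_left (norm_nonneg _) (hA i 0)) (le_max_left _ _)
    · rw [norm_mul]
      exact le_trans (mul_le_of_le_one_left (norm_nonneg _) (hA i 1)) (le_max_right _ _)
  exact max_le (key 0) (key 1)

lemma nmax_mulVec (A : Matrix (Fin 2) (Fin 2) ℚ_[p]) (hA : ∀ i j, ‖A i j‖ ≤ 1)
    (hdet : ‖A.det‖ = 1) (x : Fin 2 → ℚ_[p]) :
    max ‖A.mulVec x 0‖ ‖A.mulVec x 1‖ = max ‖x 0‖ ‖x 1‖ := by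
  refine le_antisymm (nmax_mulVec_le A hA x) ?_
  have h2 := nmax_mulVec_le (amat A) (amat_entries hA) (A.mulVec x)
  rw [amat_mulVec] at h2
  simpa only [Pi.smul_apply, smul_eq_mul, norm_mul, hdet, one_mul] using h2

lemma mulVec_ne_zero (A : Matrix (Fin 2) (Fin 2) ℚ_[p]) (hA : ∀ i j, ‖A i j‖ ≤ 1)
    (hdet : ‖A.det‖ = 1) {x : Fin 2 → ℚ_[p]} (hx : x ≠ 0) : A.mulVec x ≠ 0 := by
  intro h
  have hp := nmax_pos hx
  rw [← nmax_mulVec A hA hdet x, h] at hp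
  simp at hp

lemma cross_mulVec (A : Matrix (Fin 2) (Fin 2) ℚ_[p]) (x y : Fin 2 → ℚ_[p]) :
    A.mulVec x 0 * A.mulVec y 1 - A.mulVec x 1 * A.mulVec y 0
      = A.det * (x 0 * y 1 - x 1 * y 0) := by
  simp only [Matrix.mulVec, dotProduct, Fin.sum_univ_two, Matrix.det_fin_two]
  ring

lemma sdelta_mulVec (A : Matrix (Fin 2) (Fin 2) ℚ_[p]) (hA : ∀ i j, ‖A i j‖ ≤ 1)
    (hdet : ‖A.det‖ = 1) (x y : Fin 2 → ℚ_[p]) :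
    sdelta p (A.mulVec x) (A.mulVec y) = sdelta p x y := by
  unfold sdelta
  rw [cross_mulVec, norm_mul, hdet, one_mul, nmax_mulVec A hA hdet x, nmax_mulVec A hA hdet y]

lemma mobius_mk (A : Matrix (Fin 2) (Fin 2) ℚ_[p]) (hA : ∀ i j, ‖A i j‖ ≤ 1)
    (hdet : ‖A.det‖ = 1) {x : Fin 2 → ℚ_[p]} (hx : x ≠ 0) :
    mobius p A (Projectivization.mk ℚ_[p] x hx) =
      Projectivization.mk ℚ_[p] (A.mulVec x) (mulVec_ne_zero A hA hdet hx) := by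
  obtain ⟨a, ha⟩ := Projectivization.exists_smul_eq_mk_rep ℚ_[p] x hx
  unfold mobius
  rw [dif_pos (mulVec_ne_zero A hA hdet (Projectivization.rep_nonzero _))]
  apply (Projectivization.mk_eq_mk_iff ℚ_[p] _ _ _ _).mpr
  refine ⟨a, ?_⟩
  rw [← ha, Units.smul_def, Units.smul_def, Matrix.mulVec_smul]

lemma pdelta_mobius (A : Matrix (Fin 2) (Fin 2) ℚ_[p]) (hA : ∀ i j, ‖A i j‖ ≤ 1)
    (hdet : ‖A.det‖ = 1) (ξ η : P1 p) :
    pdelta p (mobius p A ξ) (mobius p A η) = pdelta p ξ η := by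
  induction ξ using Projectivization.ind with | h x hx =>
  induction η using Projectivization.ind with | h y hy =>
  rw [mobius_mk A hA hdet hx, mobius_mk A hA hdet hy, pdelta_mk, pdelta_mk,
    sdelta_mulVec A hA hdet]

lemma det_ne_zero_of_norm {A : Matrix (Fin 2) (Fin 2) ℚ_[p]} (hdet : ‖A.det‖ = 1) :
    A.det ≠ 0 := by
  intro h
  rw [h, norm_zero] at hdet
  norm_num at hdet

lemma mobius_amat_mobius (A : Matrix (Fin 2) (Fin 2) ℚ_[p]) (hA : ∀ i j, ‖A i j‖ ≤ 1)
    (hdet : ‖A.det‖ = 1) (ξ : P1 p) : mobius p (amat A) (mobius p A ξ) = ξ := by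
  induction ξ using Projectivization.ind with | h x hx =>
  rw [mobius_mk A hA hdet hx,
    mobius_mk (amat A) (amat_entries hA) (by rw [amat_det]; exact hdet)]
  apply (Projectivization.mk_eq_mk_iff ℚ_[p] _ _ _ _).mpr
  refine ⟨Units.mk0 A.det (det_ne_zero_of_norm hdet), ?_⟩
  rw [amat_mulVec, Units.smul_def, Units.val_mk0]

lemma mobius_mobius_amat (A : Matrix (Fin 2) (Fin 2) ℚ_[p]) (hA : ∀ i j, ‖A i j‖ ≤ 1)
    (hdet : ‖A.det‖ = 1) (ξ : P1 p) : mobius p A (mobius p (amat A) ξ) = ξ := by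
  induction ξ using Projectivization.ind with | h x hx =>
  rw [mobius_mk (amat A) (amat_entries hA) (by rw [amat_det]; exact hdet) hx,
    mobius_mk A hA hdet]
  apply (Projectivization.mk_eq_mk_iff ℚ_[p] _ _ _ _).mpr
  refine ⟨Units.mk0 A.det (det_ne_zero_of_norm hdet), ?_⟩
  rw [mulVec_amat, Units.smul_def, Units.val_mk0]

lemma mobius_image_ball (A : Matrix (Fin 2) (Fin 2) ℚ_[p]) (hA : ∀ i j, ‖A i j‖ ≤ 1)
    (hdet : ‖A.det‖ = 1) (ξ : P1 p) (r : ℝ) :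
    mobius p A '' {η : P1 p | pdelta p ξ η ≤ r} = {η : P1 p | pdelta p (mobius p A ξ) η ≤ r} := by
  ext η'
  constructor
  · rintro ⟨η, hη, rfl⟩
    simpa only [Set.mem_setOf_eq, pdelta_mobius A hA hdet] using hη
  · intro hη'
    refine ⟨mobius p (amat A) η', ?_, mobius_mobius_amat A hA hdet η'⟩
    have h2 : pdelta p (mobius p (amat A) (mobius p A ξ)) (mobius p (amat A) η') ≤ r := by
      rw [pdelta_mobius (amat A) (amat_entries hA) (by rw [amat_det]; exact hdet)]
      exact hη'
    rwa [mobius_amat_mobius A hA hdet] at h2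

lemma continuous_pdelta (ξ : P1 p) : Continuous fun η => pdelta p ξ η := by
  letI : Setoid {v : Fin 2 → ℚ_[p] // v ≠ 0} := projectivizationSetoid ℚ_[p] (Fin 2 → ℚ_[p])
  refine isQuotientMap_quotient_mk'.continuous_iff.mpr ?_
  have heq : (fun η => pdelta p ξ η) ∘ Quotient.mk' =
      fun w : {v : Fin 2 → ℚ_[p] // v ≠ 0} => sdelta p ξ.rep w.1 := by
    funext w
    have hw : (Quotient.mk' w : P1 p) = Projectivization.mk ℚ_[p] w.1 w.2 := rfl
    change pdelta p ξ (Projectivization.mk ℚ_[p] w.1 w.2) = _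
    conv_lhs => rw [← Projectivization.mk_rep ξ]
    exact pdelta_mk ξ.rep_nonzero w.2
  refine (congrArg Continuous heq).mpr ?_
  have h0 : Continuous fun w : {v : Fin 2 → ℚ_[p] // v ≠ 0} => w.1 0 :=
    (continuous_apply (0 : Fin 2)).comp continuous_subtype_val
  have h1 : Continuous fun w : {v : Fin 2 → ℚ_[p] // v ≠ 0} => w.1 1 :=
    (continuous_apply (1 : Fin 2)).comp continuous_subtype_val
  unfold sdelta
  apply Continuous.div
  · exact ((continuous_const.mul h1).sub (continuous_const.mul h0)).norm
  · exact continuous_const.mul (h0.norm.max h1.norm)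
  · intro w
    exact ne_of_gt (mul_pos (nmax_pos ξ.rep_nonzero) (nmax_pos w.2))

lemma measurableSet_ball (ξ : P1 p) (r : ℝ) :
    MeasurableSet {η : P1 p | pdelta p ξ η ≤ r} :=
  (isClosed_le (continuous_pdelta ξ) continuous_const).measurableSet

end Aux2


section Aux3

variable {p : ℕ} [Fact p.Prime]

/-- The closed ball of radius `p^{-v}` around `ξ`. -/
noncomputable def Bl (p : ℕ) [Fact p.Prime] (v : ℕ) (ξ : P1 p) : Set (P1 p) :=
  {η : P1 p | pdelta p ξ η ≤ (p : ℝ) ^ (-(v : ℤ))}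

lemma one_lt_pR : (1 : ℝ) < p := by exact_mod_cast (Fact.out : p.Prime).one_lt

lemma pow_neg_le_one (v : ℕ) : ((p : ℝ)) ^ (-(v : ℤ)) ≤ 1 := by
  rw [zpow_neg, zpow_natCast]
  exact inv_le_one_of_one_le₀ (one_le_pow₀ (le_of_lt one_lt_pR))

lemma pow_neg_lt_one {v : ℕ} (hv : 1 ≤ v) : ((p : ℝ)) ^ (-(v : ℤ)) < 1 := by
  rw [zpow_neg, zpow_natCast]
  exact inv_lt_one_of_one_lt₀ (one_lt_pow₀ one_lt_pR (by omega))

lemma norm_natCast_le_one (k : ℕ) : ‖(k : ℚ_[p])‖ ≤ 1 := by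
  have := Padic.norm_int_le_one (p := p) (k : ℤ)
  simpa using this

lemma nat_sep {w k k' : ℕ} (hk : k < p ^ w) (hk' : k' < p ^ w)
    (h : ‖(k : ℚ_[p]) - (k' : ℚ_[p])‖ ≤ (p : ℝ) ^ (-(w : ℤ))) : k = k' := by
  set m : ℤ := (k : ℤ) - (k' : ℤ) with hm_def
  have h1 : ‖(m : ℚ_[p])‖ ≤ (p : ℝ) ^ (-(w : ℤ)) := by
    rw [hm_def]
    push_cast
    exact h
  rw [Padic.norm_int_le_pow_iff_dvd] at h1
  by_contra hne
  have hm : m ≠ 0 := by omega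
  have h3 : ((p : ℤ) ^ w) ≤ |m| := by
    refine Int.le_of_dvd (abs_pos.mpr hm) ((dvd_abs _ _).mpr ?_)
    exact_mod_cast h1
  have hk2 : (k : ℤ) < (p : ℤ) ^ w := by exact_mod_cast hk
  have hk'2 : (k' : ℤ) < (p : ℤ) ^ w := by exact_mod_cast hk'
  have h4 : |m| < (p : ℤ) ^ w := abs_sub_lt_iff.mpr ⟨by omega, by omega⟩
  omega

lemma exists_appr {x : ℚ_[p]} (hx : ‖x‖ ≤ 1) (w : ℕ) :
    ∃ k : ℕ, k < p ^ w ∧ ‖x - (k : ℚ_[p])‖ ≤ (p : ℝ) ^ (-(w : ℤ)) := by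
  set z : ℤ_[p] := ⟨x, hx⟩ with hz
  refine ⟨z.appr w, PadicInt.appr_lt z w, ?_⟩
  have h := (PadicInt.norm_le_pow_iff_mem_span_pow (z - (z.appr w : ℤ_[p])) w).mpr
    (PadicInt.appr_spec w z)
  rw [PadicInt.norm_def, PadicInt.coe_sub, PadicInt.coe_natCast] at h
  exact h

lemma mem_Bl_iota {v : ℕ} (hv : 1 ≤ v) {c : ℚ_[p]} (hc : ‖c‖ ≤ 1) (η : P1 p) :
    η ∈ Bl p v (iota p c) ↔
      ∃ x : ℚ_[p], ‖x‖ ≤ 1 ∧ ‖x - c‖ ≤ (p : ℝ) ^ (-(v : ℤ)) ∧ η = iota p x := by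
  constructor
  · intro hη
    rcases chart_cases η with ⟨x, hx, rfl⟩ | ⟨y, hy, rfl⟩
    · refine ⟨x, hx, ?_, rfl⟩
      rw [Bl, Set.mem_setOf_eq, pdelta_iota_iota hc hx] at hη
      rwa [norm_sub_rev]
    · exfalso
      rw [Bl, Set.mem_setOf_eq, pdelta_iota_iotaP hc hy] at hη
      exact absurd hη (not_le.mpr (pow_neg_lt_one hv))
  · rintro ⟨x, hx1, hx, rfl⟩
    rw [Bl, Set.mem_setOf_eq, pdelta_iota_iota hc hx1, norm_sub_rev]
    exact hx

lemma mem_Bl_iotaP {v : ℕ} (hv : 1 ≤ v) {c : ℚ_[p]} (hc : ‖c‖ < 1) (η : P1 p) :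
    η ∈ Bl p v (iotaP c) ↔
      ∃ y : ℚ_[p], ‖y‖ < 1 ∧ ‖y - c‖ ≤ (p : ℝ) ^ (-(v : ℤ)) ∧ η = iotaP y := by
  constructor
  · intro hη
    rcases chart_cases η with ⟨x, hx, rfl⟩ | ⟨y, hy, rfl⟩
    · exfalso
      rw [Bl, Set.mem_setOf_eq, pdelta_iotaP_iota hc hx] at hη
      exact absurd hη (not_le.mpr (pow_neg_lt_one hv))
    · refine ⟨y, hy, ?_, rfl⟩
      rw [Bl, Set.mem_setOf_eq, pdelta_iotaP_iotaP hc.le hy.le] at hη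
      rwa [norm_sub_rev]
  · rintro ⟨y, hy1, hy, rfl⟩
    rw [Bl, Set.mem_setOf_eq, pdelta_iotaP_iotaP hc.le hy1.le, norm_sub_rev]
    exact hy

lemma Bl_iota_disjoint {v : ℕ} (hv : 1 ≤ v) {k k' : ℕ} (hk : k < p ^ v) (hk' : k' < p ^ v)
    (hne : k ≠ k') : Disjoint (Bl p v (iota p (k : ℚ_[p]))) (Bl p v (iota p (k' : ℚ_[p]))) := by
  rw [Set.disjoint_left]
  intro η hη hη'
  obtain ⟨x, hx1, hx, rfl⟩ := (mem_Bl_iota hv (norm_natCast_le_one k) η).mp hη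
  obtain ⟨x', _, hx', hxx⟩ := (mem_Bl_iota hv (norm_natCast_le_one k') _).mp hη'
  have hxe : x = x' := iota_injective hxx
  subst hxe
  apply hne
  refine nat_sep hk hk' ?_
  have := Padic.nonarchimedean ((k : ℚ_[p]) - x) (x - (k' : ℚ_[p]))
  rw [show (k : ℚ_[p]) - x + (x - (k' : ℚ_[p])) = (k : ℚ_[p]) - k' by ring] at this
  refine le_trans this (max_le ?_ hx')
  rw [norm_sub_rev]
  exact hx

lemma norm_pj_lt_one (j : ℕ) : ‖(p : ℚ_[p]) * (j : ℚ_[p])‖ < 1 := by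
  rw [norm_mul, Padic.norm_p]
  calc (p : ℝ)⁻¹ * ‖(j : ℚ_[p])‖ ≤ (p : ℝ)⁻¹ * 1 := by
        refine mul_le_mul_of_nonneg_left (norm_natCast_le_one j) (by positivity)
    _ < 1 := by
        rw [mul_one]
        exact inv_lt_one_of_one_lt₀ one_lt_pR

lemma pinv_mul_pow {v : ℕ} (hv : 1 ≤ v) :
    (p : ℝ)⁻¹ * (p : ℝ) ^ (-((v - 1 : ℕ) : ℤ)) = (p : ℝ) ^ (-(v : ℤ)) := by
  have hp0 : (p : ℝ) ≠ 0 := by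
    have := one_lt_pR (p := p)
    linarith
  rw [← zpow_neg_one, ← zpow_add₀ hp0]
  congr 1
  omega

lemma Bl_iotaP_disjoint {v : ℕ} (hv : 1 ≤ v) {j j' : ℕ} (hj : j < p ^ (v - 1))
    (hj' : j' < p ^ (v - 1)) (hne : j ≠ j') :
    Disjoint (Bl p v (iotaP ((p : ℚ_[p]) * (j : ℚ_[p])))) (Bl p v (iotaP ((p : ℚ_[p]) * (j' : ℚ_[p])))) := by
  rw [Set.disjoint_left]
  intro η hη hη'
  obtain ⟨y, hy1, hy, rfl⟩ := (mem_Bl_iotaP hv (norm_pj_lt_one j) η).mp hη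
  obtain ⟨y', _, hy', hyy⟩ := (mem_Bl_iotaP hv (norm_pj_lt_one j') _).mp hη'
  have hye : y = y' := iotaP_injective hyy
  subst hye
  apply hne
  have hsep : ‖(p : ℚ_[p]) * (j : ℚ_[p]) - (p : ℚ_[p]) * (j' : ℚ_[p])‖ ≤ (p : ℝ) ^ (-(v : ℤ)) := by
    have := Padic.nonarchimedean ((p : ℚ_[p]) * (j : ℚ_[p]) - y) (y - (p : ℚ_[p]) * (j' : ℚ_[p]))
    rw [show (p : ℚ_[p]) * (j : ℚ_[p]) - y + (y - (p : ℚ_[p]) * (j' : ℚ_[p])) =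
      (p : ℚ_[p]) * (j : ℚ_[p]) - (p : ℚ_[p]) * (j' : ℚ_[p]) by ring] at this
    refine le_trans this (max_le ?_ hy')
    rw [norm_sub_rev]
    exact hy
  rw [show (p : ℚ_[p]) * (j : ℚ_[p]) - (p : ℚ_[p]) * (j' : ℚ_[p]) = (p : ℚ_[p]) * ((j : ℚ_[p]) - j') by ring,
    norm_mul, Padic.norm_p, ← pinv_mul_pow hv] at hsep
  have h2 : ‖(j : ℚ_[p]) - (j' : ℚ_[p])‖ ≤ (p : ℝ) ^ (-((v - 1 : ℕ) : ℤ)) := by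
    have hppos : (0 : ℝ) < (p : ℝ)⁻¹ := by
      have := one_lt_pR (p := p)
      positivity
    exact le_of_mul_le_mul_left hsep hppos
  exact nat_sep hj hj' h2

lemma Bl_iota_iotaP_disjoint {v : ℕ} (hv : 1 ≤ v) {k j : ℕ} :
    Disjoint (Bl p v (iota p (k : ℚ_[p]))) (Bl p v (iotaP ((p : ℚ_[p]) * (j : ℚ_[p])))) := by
  rw [Set.disjoint_left]
  intro η hη hη'
  obtain ⟨x, hx1, hx, rfl⟩ := (mem_Bl_iota hv (norm_natCast_le_one k) η).mp hη
  obtain ⟨y, hy1, hy, hxy⟩ := (mem_Bl_iotaP hv (norm_pj_lt_one j) _).mp hη'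
  exact iota_ne_iotaP hx1 hy1 hxy

lemma Bl_cover {v : ℕ} (hv : 1 ≤ v) :
    (⋃ t : Fin (p ^ v) ⊕ Fin (p ^ (v - 1)),
      Bl p v (Sum.elim (fun k : Fin (p ^ v) => iota p ((k : ℕ) : ℚ_[p]))
        (fun j : Fin (p ^ (v - 1)) => iotaP ((p : ℚ_[p]) * ((j : ℕ) : ℚ_[p]))) t)) =
      Set.univ := by
  ext η
  simp only [Set.mem_iUnion, Set.mem_univ, iff_true]
  rcases chart_cases η with ⟨x, hx, rfl⟩ | ⟨y, hy, rfl⟩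
  · obtain ⟨k, hk, hkx⟩ := exists_appr hx v
    exact ⟨Sum.inl ⟨k, hk⟩,
      (mem_Bl_iota hv (norm_natCast_le_one k) _).mpr ⟨x, hx, hkx, rfl⟩⟩
  · have hy1 : ‖y‖ ≤ (p : ℝ) ^ (-(1 : ℤ)) := by
      rw [Padic.norm_le_pow_iff_norm_lt_pow_add_one]
      simpa using hy
    have hyp : ‖y / (p : ℚ_[p])‖ ≤ 1 := by
      rw [norm_div, Padic.norm_p, div_eq_mul_inv, inv_inv]
      calc ‖y‖ * (p : ℝ) ≤ (p : ℝ)^(-(1:ℤ)) * (p : ℝ) := by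
            refine mul_le_mul_of_nonneg_right hy1 (by positivity)
        _ = 1 := by
            rw [zpow_neg_one]
            exact inv_mul_cancel₀ (by have := one_lt_pR (p := p); linarith)
    obtain ⟨j, hj, hjy⟩ := exists_appr hyp (v - 1)
    refine ⟨Sum.inr ⟨j, hj⟩,
      (mem_Bl_iotaP hv (norm_pj_lt_one j) _).mpr ⟨y, hy, ?_, rfl⟩⟩
    have hpne : (p : ℚ_[p]) ≠ 0 := by
      intro h0
      have := Padic.norm_p (p := p)
      rw [h0, norm_zero] at this
      have h1 := one_lt_pR (p := p)
      have : (p : ℝ)⁻¹ ≠ 0 := by positivity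
      simp_all
    have : y - (p : ℚ_[p]) * (j : ℚ_[p]) = (p : ℚ_[p]) * (y / (p : ℚ_[p]) - j) := by
      field_simp
    rw [this, norm_mul, Padic.norm_p, ← pinv_mul_pow hv]
    refine mul_le_mul_of_nonneg_left hjy (by positivity)

lemma nu_ball (ν : Measure (P1 p)) [IsProbabilityMeasure ν] (hν : IsGLInvariant p ν)
    {v : ℕ} (hv : 1 ≤ v) (ξ : P1 p) :
    ν (Bl p v ξ) = (((p ^ v + p ^ (v - 1) : ℕ) : ENNReal))⁻¹ := by
  classical
  -- all balls have the same measure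
  have hconst : ∀ ζ : P1 p, ν (Bl p v ζ) = ν (Bl p v (iota p 0)) := by
    intro ζ
    obtain ⟨A, hA, hdet, hAζ⟩ :
        ∃ A : Matrix (Fin 2) (Fin 2) ℚ_[p],
          (∀ i j, ‖A i j‖ ≤ 1) ∧ ‖A.det‖ = 1 ∧ mobius p A (iota p 0) = ζ := by
      rcases chart_cases ζ with ⟨x, hx, rfl⟩ | ⟨y, hy, rfl⟩
      · refine ⟨Matrix.of ![![1, x], ![0, 1]], ?_, ?_, ?_⟩
        · intro i j
          fin_cases i <;> fin_cases j <;> simp [hx]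
        · simp [Matrix.det_fin_two]
        · rw [iota, mobius_mk _ (by intro i j; fin_cases i <;> fin_cases j <;> simp [hx])
            (by simp [Matrix.det_fin_two])]
          apply (Projectivization.mk_eq_mk_iff ℚ_[p] _ _ _ _).mpr
          refine ⟨1, ?_⟩
          have hvec : (Matrix.of ![![1, x], ![0, 1]]).mulVec ![(0 : ℚ_[p]), 1] = ![x, 1] := by
            funext i
            fin_cases i <;> simp [Matrix.mulVec, dotProduct, Fin.sum_univ_two]
          rw [hvec, one_smul]
      · refine ⟨Matrix.of ![![0, 1], ![1, y]], ?_, ?_, ?_⟩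
        · intro i j
          fin_cases i <;> fin_cases j <;> simp [hy.le]
        · simp [Matrix.det_fin_two]
        · rw [iota, iotaP, mobius_mk _ (by intro i j; fin_cases i <;> fin_cases j <;> simp [hy.le])
            (by simp [Matrix.det_fin_two])]
          apply (Projectivization.mk_eq_mk_iff ℚ_[p] _ _ _ _).mpr
          refine ⟨1, ?_⟩
          have hvec : (Matrix.of ![![0, 1], ![1, y]]).mulVec ![(0 : ℚ_[p]), 1] = ![1, y] := by
            funext i
            fin_cases i <;> simp [Matrix.mulVec, dotProduct, Fin.sum_univ_two]
          rw [hvec, one_smul]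
    calc ν (Bl p v ζ) = ν (mobius p A '' Bl p v (iota p 0)) := by
          simp only [Bl]
          rw [mobius_image_ball A hA hdet, hAζ]
      _ = ν (Bl p v (iota p 0)) := hν A hA hdet _ (measurableSet_ball _ _)
  set f : Fin (p ^ v) ⊕ Fin (p ^ (v - 1)) → P1 p :=
    Sum.elim (fun k : Fin (p ^ v) => iota p ((k : ℕ) : ℚ_[p]))
      (fun j : Fin (p ^ (v - 1)) => iotaP ((p : ℚ_[p]) * ((j : ℕ) : ℚ_[p]))) with hf
  have hdisj : Pairwise (Function.onFun Disjoint fun t => Bl p v (f t)) := by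
    intro t t' hne
    rcases t with k | j <;> rcases t' with k' | j'
    · exact Bl_iota_disjoint hv k.2 k'.2 (by
        intro h
        exact hne (by rw [Sum.inl.injEq]; exact Fin.ext h))
    · exact Bl_iota_iotaP_disjoint hv
    · exact (Bl_iota_iotaP_disjoint hv).symm
    · exact Bl_iotaP_disjoint hv j.2 j'.2 (by
        intro h
        exact hne (by rw [Sum.inr.injEq]; exact Fin.ext h))
  have key : ν (⋃ t, Bl p v (f t)) = ∑' t, ν (Bl p v (f t)) :=
    measure_iUnion hdisj fun t => measurableSet_ball _ _
  rw [hf, Bl_cover hv, measure_univ, tsum_fintype] at key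
  have hsum : ∀ t ∈ Finset.univ, ν (Bl p v (f t)) = ν (Bl p v (iota p 0)) :=
    fun t _ => hconst (f t)
  rw [Finset.sum_congr rfl hsum, Finset.sum_const, Finset.card_univ, Fintype.card_sum,
    Fintype.card_fin, Fintype.card_fin, nsmul_eq_mul] at key
  have hpos : 0 < p ^ v + p ^ (v - 1) :=
    Nat.add_pos_left (pow_pos (Fact.out : p.Prime).pos v) _
  have hn0 : (((p ^ v + p ^ (v - 1) : ℕ)) : ENNReal) ≠ 0 :=
    Nat.cast_ne_zero.mpr (by omega)
  have hnt : (((p ^ v + p ^ (v - 1) : ℕ)) : ENNReal) ≠ ⊤ := ENNReal.natCast_ne_top _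
  have hfin : ν (Bl p v (iota p 0)) =
      (((p ^ v + p ^ (v - 1) : ℕ)) : ENNReal)⁻¹ := by
    calc ν (Bl p v (iota p 0))
        = ((((p ^ v + p ^ (v - 1) : ℕ)) : ENNReal)⁻¹ * (((p ^ v + p ^ (v - 1) : ℕ)) : ENNReal)) *
          ν (Bl p v (iota p 0)) := by
          rw [ENNReal.inv_mul_cancel hn0 hnt, one_mul]
      _ = (((p ^ v + p ^ (v - 1) : ℕ)) : ENNReal)⁻¹ *
          ((((p ^ v + p ^ (v - 1) : ℕ)) : ENNReal) * ν (Bl p v (iota p 0))) := by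
          rw [mul_assoc]
      _ = (((p ^ v + p ^ (v - 1) : ℕ)) : ENNReal)⁻¹ := by
          rw [← key, mul_one]
  rw [hconst ξ, hfin]

lemma enn_count {v : ℕ} (hv : 1 ≤ v) :
    (((p ^ v + p ^ (v - 1) : ℕ)) : ENNReal)⁻¹ =
      (p : ENNReal) ^ (-(v : ℤ)) * ((p : ENNReal) / ((p : ENNReal) + 1)) := by
  have hp0 : (p : ENNReal) ≠ 0 := by
    exact_mod_cast Nat.cast_ne_zero.mpr (Fact.out : p.Prime).ne_zero
  have hpt : (p : ENNReal) ≠ ⊤ := ENNReal.natCast_ne_top _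
  obtain ⟨w, rfl⟩ : ∃ w, v = w + 1 := ⟨v - 1, by omega⟩
  have hstep : (((p ^ (w + 1) + p ^ (w + 1 - 1) : ℕ)) : ENNReal) =
      (p : ENNReal) ^ w * ((p : ENNReal) + 1) := by
    rw [show w + 1 - 1 = w from rfl]
    push_cast
    rw [pow_succ]
    ring
  rw [hstep, ENNReal.mul_inv (Or.inl (pow_ne_zero w hp0)) (Or.inl (ENNReal.pow_ne_top hpt))]
  rw [ENNReal.zpow_neg, zpow_natCast, div_eq_mul_inv, pow_succ,
    ENNReal.mul_inv (Or.inl (pow_ne_zero w hp0)) (Or.inl (ENNReal.pow_ne_top hpt))]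
  symm
  calc ((p : ENNReal) ^ w)⁻¹ * (p : ENNReal)⁻¹ * ((p : ENNReal) * ((p : ENNReal) + 1)⁻¹)
      = ((p : ENNReal) ^ w)⁻¹ * (((p : ENNReal)⁻¹ * (p : ENNReal)) * ((p : ENNReal) + 1)⁻¹) := by
        ring
    _ = ((p : ENNReal) ^ w)⁻¹ * ((p : ENNReal) + 1)⁻¹ := by
        rw [ENNReal.inv_mul_cancel hp0 hpt, one_mul]

end Aux3

theorem statement_17 (p : ℕ) [Fact p.Prime]
    (ν : Measure (P1 p)) [IsProbabilityMeasure ν] (hν : IsGLInvariant p ν)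
    (ξ : P1 p) (v : ℕ) (hv : 1 ≤ v) :
    ν {η : P1 p | pdelta p ξ η ≤ (p : ℝ) ^ (-(v : ℤ))} =
      (p : ENNReal) ^ (-(v : ℤ)) * ((p : ENNReal) / ((p : ENNReal) + 1)) ∧
    ν {ζ : P1 p | ∃ x : ℚ_[p], ‖x‖ ≤ 1 ∧ ζ = iota p x} =
      (p : ENNReal) / ((p : ENNReal) + 1) := by
  constructor
  · rw [show {η : P1 p | pdelta p ξ η ≤ (p : ℝ) ^ (-(v : ℤ))} = Bl p v ξ from rfl,
      nu_ball ν hν hv ξ, enn_count hv]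
  · have hset : {ζ : P1 p | ∃ x : ℚ_[p], ‖x‖ ≤ 1 ∧ ζ = iota p x} =
        ⋃ k : Fin p, Bl p 1 (iota p ((k : ℕ) : ℚ_[p])) := by
      ext ζ
      simp only [Set.mem_setOf_eq, Set.mem_iUnion]
      constructor
      · rintro ⟨x, hx, rfl⟩
        obtain ⟨k, hk, hkx⟩ := exists_appr hx 1
        rw [pow_one] at hk
        exact ⟨⟨k, hk⟩, (mem_Bl_iota le_rfl (norm_natCast_le_one k) _).mpr ⟨x, hx, hkx, rfl⟩⟩
      · rintro ⟨k, hk⟩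
        obtain ⟨x, hx1, _, rfl⟩ := (mem_Bl_iota le_rfl (norm_natCast_le_one _) _).mp hk
        exact ⟨x, hx1, rfl⟩
    have hdisj : Pairwise (Function.onFun Disjoint
        fun k : Fin p => Bl p 1 (iota p ((k : ℕ) : ℚ_[p]))) := by
      intro k k' hne
      refine Bl_iota_disjoint le_rfl (by simpa using k.2) (by simpa using k'.2) ?_
      intro h
      exact hne (Fin.ext h)
    have key : ν (⋃ k : Fin p, Bl p 1 (iota p ((k : ℕ) : ℚ_[p]))) =
        ∑' k : Fin p, ν (Bl p 1 (iota p ((k : ℕ) : ℚ_[p]))) :=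
      measure_iUnion hdisj fun k => measurableSet_ball _ _
    rw [hset, key, tsum_fintype]
    rw [Finset.sum_congr rfl
      (fun (k : Fin p) _ => nu_ball ν hν le_rfl (iota p ((k : ℕ) : ℚ_[p]))),
      Finset.sum_const, Finset.card_univ, Fintype.card_fin, nsmul_eq_mul]
    have hp0 : (p : ENNReal) ≠ 0 := by
      exact_mod_cast Nat.cast_ne_zero.mpr (Fact.out : p.Prime).ne_zero
    have hpt : (p : ENNReal) ≠ ⊤ := ENNReal.natCast_ne_top _
    rw [show (((p ^ 1 + p ^ 0 : ℕ)) : ENNReal) = (p : ENNReal) + 1 by push_cast; ring]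
    rw [div_eq_mul_inv]

end LogCoulomb
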